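/- If C_n is a cycle on n \geq 3 vertices, then md(C_n) = \lfloor n/2 \rfloor. -/

import Mathlib

open SimpleGraph

/-- An edge-coloring `Γ` is a monochromatic disconnection coloring (MD-coloring) of `G`
if every pair of distinct vertices is separated by a monochromatic edge-cut. -/
def IsMDColoring {V : Type*} (G : SimpleGraph V) (Γ : Sym2 V → ℕ) : Prop :=
  ∀ u v : V, u ≠ v → ∃ (c : ℕ) (F : Set (Sym2 V)), F ⊆ G.edgeSet ∧
    (∀ e ∈ F, Γ e = c) ∧ ¬ (G.deleteEdges F).Reachable u v

/-- The monochromatic disconnection number of `G`: the maximum number of colors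
used by an MD-coloring of `G`. -/
noncomputable def md {V : Type*} (G : SimpleGraph V) : ℕ :=
  sSup {n : ℕ | ∃ Γ : Sym2 V → ℕ, IsMDColoring G Γ ∧ (Γ '' G.edgeSet).ncard = n}

open scoped Fin.NatCast Fin.CommRing

section Helpers

variable {n : ℕ} [NeZero n]

private lemma nat_mod2 {a : ℕ} (h : a < 2 * n) (h0 : 0 < n) :
    a % n = if a < n then a else a - n := by
  split
  · exact Nat.mod_eq_of_lt ‹_›
  · rw [Nat.mod_eq_sub_mod (by omega), Nat.mod_eq_of_lt (by omega)]

private lemma fin_val_one (hn : 3 ≤ n) : (1 : Fin n).val = 1 := by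
  rw [Fin.val_one']; exact Nat.mod_eq_of_lt (by omega)

private lemma fin_val_add (a b : Fin n) :
    (a + b).val = if a.val + b.val < n then a.val + b.val else a.val + b.val - n := by
  have h0 : 0 < n := Nat.pos_of_ne_zero (NeZero.ne n)
  rw [Fin.add_def]
  exact nat_mod2 (by omega) h0

private lemma fin_val_sub (a b : Fin n) :
    (a - b).val = if b.val ≤ a.val then a.val - b.val else n - b.val + a.val := by
  have h0 : 0 < n := Nat.pos_of_ne_zero (NeZero.ne n)
  have ha := a.isLt; have hb := b.isLt
  rw [Fin.sub_def]
  show (n - b.val + a.val) % n = _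
  rw [nat_mod2 (by omega) h0]
  split <;> split <;> omega

/-- The `i`-th edge of the cycle graph. -/
private def Ec (i : Fin n) : Sym2 (Fin n) := s(i, i + 1)

private lemma adjE (hn : 3 ≤ n) (i : Fin n) : (cycleGraph n).Adj i (i + 1) := by
  rw [cycleGraph_adj']
  right
  have : i + 1 - i = 1 := by ring
  rw [this, fin_val_one hn]

private lemma Emem (hn : 3 ≤ n) (i : Fin n) : Ec i ∈ (cycleGraph n).edgeSet :=
  adjE hn i

private lemma no_one (hn : 3 ≤ n) (i : Fin n) : i ≠ i + 1 := by
  intro h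
  have hv := congrArg Fin.val h
  rw [fin_val_add, fin_val_one hn] at hv
  have hi := i.isLt
  split at hv <;> omega

private lemma no_two (hn : 3 ≤ n) (i : Fin n) : i ≠ i + 1 + 1 := by
  intro h
  have hv := congrArg Fin.val h
  rw [fin_val_add, fin_val_add, fin_val_one hn] at hv
  have hi := i.isLt
  split at hv <;> split at hv <;> omega

private lemma E_inj (hn : 3 ≤ n) {i j : Fin n} (h : Ec i = Ec j) : i = j := by
  rw [Ec, Ec, Sym2.eq_iff] at h
  rcases h with ⟨h, -⟩ | ⟨h1, h2⟩
  · exact h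
  · exfalso
    apply no_two hn i
    nth_rewrite 1 [h1]
    rw [← h2]

private lemma edge_repr (hn : 3 ≤ n) {e : Sym2 (Fin n)} (he : e ∈ (cycleGraph n).edgeSet) :
    ∃ i, e = Ec i := by
  induction e with
  | h u v =>
    rw [mem_edgeSet, cycleGraph_adj'] at he
    rcases he with h | h
    · refine ⟨v, ?_⟩
      have : u = v + 1 := by
        have h1 : u - v = 1 := by
          apply Fin.val_injective; rw [h, fin_val_one hn]
        rw [← h1]; ring
      rw [Ec, this, Sym2.eq_swap]
    · refine ⟨u, ?_⟩
      have : v = u + 1 := by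
        have h1 : v - u = 1 := by
          apply Fin.val_injective; rw [h, fin_val_one hn]
        rw [← h1]; ring
      rw [Ec, this]

private lemma reach_S {V : Type*} {H : SimpleGraph V} {S : Set V}
    (h : ∀ x y, H.Adj x y → (x ∈ S ↔ y ∈ S)) {u v : V} (hr : H.Reachable u v) :
    u ∈ S ↔ v ∈ S := by
  obtain ⟨w⟩ := hr
  induction w with
  | nil => exact Iff.rfl
  | cons h' p ih => exact (h _ _ h').trans ih

private lemma step_adj (hn : 3 ≤ n) (a i : Fin n) (hne : i ≠ a) :
    ((cycleGraph n).deleteEdges {Ec a}).Adj i (i + 1) := by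
  rw [SimpleGraph.deleteEdges_adj]
  refine ⟨adjE hn i, ?_⟩
  intro h
  exact hne (E_inj hn (show Ec i = Ec a from h))

private lemma one_edge_reach (hn : 3 ≤ n) (a u v : Fin n) :
    ((cycleGraph n).deleteEdges {Ec a}).Reachable u v := by
  have key : ∀ d : ℕ, d < n →
      ((cycleGraph n).deleteEdges {Ec a}).Reachable (a + 1) (a + 1 + (d : Fin n)) := by
    intro d
    induction d with
    | zero =>
      intro _
      simp only [Nat.cast_zero, add_zero]
      exact Reachable.refl _
    | succ d ih =>
      intro hd
      have r1 := ih (by omega)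
      have hne : a + 1 + (d : Fin n) ≠ a := by
        intro h
        have h2 : a + ((1 : Fin n) + (d : Fin n)) = a + 0 := by
          rw [add_zero, ← add_assoc]; exact h
        have h3 := add_left_cancel h2
        have h4 := congrArg Fin.val h3
        rw [fin_val_add, fin_val_one hn, Fin.val_natCast, Fin.val_zero,
          Nat.mod_eq_of_lt (by omega)] at h4
        split at h4 <;> omega
      have r2 := (step_adj hn a _ hne).reachable
      have hcast : ((d + 1 : ℕ) : Fin n) = (d : Fin n) + 1 := by push_cast; ring
      rw [hcast, ← add_assoc]
      exact r1.trans r2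
  have reach1 : ∀ x : Fin n, ((cycleGraph n).deleteEdges {Ec a}).Reachable (a + 1) x := by
    intro x
    have h1 := key ((x - (a + 1)).val) (x - (a + 1)).isLt
    rwa [Fin.cast_val_eq_self, show a + 1 + (x - (a + 1)) = x by ring] at h1
  exact (reach1 u).symm.trans (reach1 v)

private lemma cut_adj (hn : 3 ≤ n) {k : ℕ} (hk1 : 1 ≤ k) (hk2 : 2 * k ≤ n)
    {a' : Fin n} (ha : a'.val + k < n) {x y : Fin n}
    (hadj : ((cycleGraph n).deleteEdges {Ec a', Ec (a' + (k : Fin n))}).Adj x y) :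
    ((x - a' - 1).val < k ↔ (y - a' - 1).val < k) := by
  have hkval : ((k : ℕ) : Fin n).val = k := by
    rw [Fin.val_natCast, Nat.mod_eq_of_lt (by omega)]
  have claim : ∀ z : Fin n, Ec z ∉ ({Ec a', Ec (a' + (k : Fin n))} : Set (Sym2 (Fin n))) →
      ((z - a' - 1).val < k ↔ (z + 1 - a' - 1).val < k) := by
    intro z hz
    rw [Set.mem_insert_iff, Set.mem_singleton_iff] at hz
    push_neg at hz
    obtain ⟨hz1, hz2⟩ := hz
    have hzne1 : z ≠ a' := fun h => hz1 (by rw [h])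
    have hzne2 : z ≠ a' + (k : ℕ) := fun h => hz2 (by rw [h])
    -- translate to val statements
    have e1 : (a' - a' - 1).val = n - 1 := by
      rw [sub_self, fin_val_sub, fin_val_one hn, Fin.val_zero]
      split <;> omega
    have e2 : (a' + (k : Fin n) - a' - 1).val = k - 1 := by
      rw [show a' + (k : Fin n) - a' - 1 = ((k : ℕ) : Fin n) - 1 by ring, fin_val_sub,
        fin_val_one hn, hkval]
      split <;> omega
    have key1 : (z - a' - 1).val ≠ n - 1 := by
      intro h
      apply hzne1
      have h5 : z - a' - 1 = a' - a' - 1 := Fin.val_injective (by rw [h, e1])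
      exact sub_left_inj.mp (sub_left_inj.mp h5)
    have key2 : (z - a' - 1).val ≠ k - 1 := by
      intro h
      apply hzne2
      have h5 : z - a' - 1 = a' + (k : Fin n) - a' - 1 := Fin.val_injective (by rw [h, e2])
      exact sub_left_inj.mp (sub_left_inj.mp h5)
    have e3 : (z + 1 - a' - 1).val = ((z - a' - 1).val + 1) % n := by
      rw [show z + 1 - a' - 1 = (z - a' - 1) + 1 by ring, fin_val_add, fin_val_one hn,
        nat_mod2 (by have := (z - a' - 1).isLt; omega) (by omega)]
    rw [e3, nat_mod2 (by have := (z - a' - 1).isLt; omega) (by omega)]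
    have hlt := (z - a' - 1).isLt
    split <;> omega
  rw [SimpleGraph.deleteEdges_adj, cycleGraph_adj'] at hadj
  obtain ⟨hc, hF⟩ := hadj
  rcases hc with h | h
  · -- x - y = 1, so x = y + 1
    have hx : x = y + 1 := by
      have h1 : x - y = 1 := Fin.val_injective (by rw [h, fin_val_one hn])
      rw [← h1]; ring
    have hEy : Ec y = s(x, y) := by rw [Ec, hx, Sym2.eq_swap]
    have := claim y (by rw [hEy]; exact hF)
    rw [← hx] at this
    exact this.symm
  · have hy : y = x + 1 := by
      have h1 : y - x = 1 := Fin.val_injective (by rw [h, fin_val_one hn])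
      rw [← h1]; ring
    have hEx : Ec x = s(x, y) := by rw [Ec, ← hy]
    have := claim x (by rw [hEx]; exact hF)
    rwa [← hy] at this

private lemma cut_sep (hn : 3 ≤ n) {k : ℕ} (hk1 : 1 ≤ k) (hk2 : 2 * k ≤ n)
    {a' : Fin n} (ha : a'.val + k < n) {u v : Fin n}
    (hu : (u - a' - 1).val < k) (hv : ¬ (v - a' - 1).val < k) :
    ¬ ((cycleGraph n).deleteEdges {Ec a', Ec (a' + (k : Fin n))}).Reachable u v := by
  intro hr
  have := reach_S (S := {x : Fin n | (x - a' - 1).val < k})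
    (fun x y hxy => cut_adj hn hk1 hk2 ha hxy) hr
  exact hv (this.mp hu)

end Helpers

section Coloring

/-- The optimal MD-coloring of the cycle. -/
private def gamma0 (n k : ℕ) [NeZero n] : Sym2 (Fin n) → ℕ :=
  Sym2.lift ⟨fun u v =>
    if v = u + 1 ∧ u = v + 1 then 0
    else if v = u + 1 then u.val % k
    else if u = v + 1 then v.val % k else 0, by
    intro u v
    simp only
    split_ifs <;> first | rfl | tauto⟩

variable {n : ℕ} [NeZero n]

private lemma gamma0_E (hn : 3 ≤ n) (k : ℕ) (i : Fin n) :
    gamma0 n k (Ec i) = i.val % k := by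
  rw [Ec, gamma0, Sym2.lift_mk]
  simp only
  split_ifs <;> first | rfl | (exact absurd (by tauto) (no_two hn i))

end Coloring

theorem stmt_4 (n : ℕ) (hn : 3 ≤ n) :
    md (SimpleGraph.cycleGraph n) = n / 2 := by
  haveI : NeZero n := ⟨by omega⟩
  set k := n / 2 with hk
  have hk1 : 1 ≤ k := by omega
  have hk2 : 2 * k ≤ n := by omega
  have hkn1 : n ≤ 2 * k + 1 := by omega
  -- lower bound : gamma0 is an MD coloring
  have main : ∀ u v : Fin n, 1 ≤ (v - u).val → (v - u).val ≤ k →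
      ∃ c F, F ⊆ (cycleGraph n).edgeSet ∧ (∀ e ∈ F, gamma0 n k e = c) ∧
        ¬ ((cycleGraph n).deleteEdges F).Reachable u v := by
    intro u v hd1 hd2
    set d := (v - u).val with hd
    have hu := u.isLt
    set a : ℕ := if u.val < k then u.val else u.val - k with haa
    have ha : a + k < n := by split_ifs at haa <;> omega
    set a' : Fin n := ⟨a, by omega⟩ with ha'
    have hkval : ((k : ℕ) : Fin n).val = k := by
      rw [Fin.val_natCast, Nat.mod_eq_of_lt (by omega)]
    have hb'val : (a' + (k : Fin n)).val = a + k := by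
      have haval : a'.val = a := rfl
      rw [fin_val_add, hkval, haval]
      split <;> omega
    refine ⟨a % k, {Ec a', Ec (a' + (k : Fin n))}, ?_, ?_, ?_⟩
    · rintro e (rfl | rfl) <;> exact Emem hn _
    · rintro e (rfl | rfl)
      · rw [gamma0_E hn]
      · rw [gamma0_E hn, hb'val, Nat.add_mod_right]
    · by_cases hcase : u.val < k
      · -- u = a'
        have hua : u = a' := by
          apply Fin.val_injective
          show u.val = a
          rw [haa, if_pos hcase]
        have hvin : (v - a' - 1).val < k := by
          rw [← hua, show v - u - 1 = (v - u) - 1 by ring, fin_val_sub, fin_val_one hn, ← hd]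
          split <;> omega
        have huout : ¬ (u - a' - 1).val < k := by
          rw [← hua, sub_self, show (0 : Fin n) - 1 = 0 - 1 by ring, fin_val_sub,
            fin_val_one hn, Fin.val_zero]
          simp; omega
        intro hr
        exact cut_sep hn hk1 hk2 ha hvin huout hr.symm
      · -- u = b'
        have hub : u = a' + (k : ℕ) := by
          apply Fin.val_injective; rw [hb'val]; simp [haa, hcase]; omega
        have huin : (u - a' - 1).val < k := by
          rw [hub, show a' + (k : Fin n) - a' - 1 = ((k : ℕ) : Fin n) - 1 by ring,
            fin_val_sub, fin_val_one hn, hkval]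
          split <;> omega
        have hvout : ¬ (v - a' - 1).val < k := by
          have hstep : v - a' - 1 = (v - u) + (k : ℕ) - 1 := by rw [hub]; ring
          rw [hstep, fin_val_sub, fin_val_add, fin_val_one hn, hkval, ← hd]
          split <;> split <;> omega
        exact cut_sep hn hk1 hk2 ha huin hvout
  have hMD : IsMDColoring (cycleGraph n) (gamma0 n k) := by
    intro u v huv
    have hdpos : 1 ≤ (v - u).val := by
      rcases Nat.eq_zero_or_pos (v - u).val with h | h
      · exfalso
        apply huv
        have h5 : v - u = u - u := by
          rw [sub_self]; exact Fin.val_injective (by simpa using h)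
        exact (sub_left_inj.mp h5).symm
      · omega
    by_cases hd : (v - u).val ≤ k
    · exact main u v hdpos hd
    · have hsum : (v - u).val + (u - v).val = n := by
        rw [fin_val_sub, fin_val_sub]
        have := u.isLt; have := v.isLt
        have hne : u.val ≠ v.val := fun h => huv (Fin.val_injective h)
        split <;> split <;> omega
      have hlt := (v - u).isLt
      obtain ⟨c, F, h1, h2, h3⟩ := main v u (by omega) (by omega)
      exact ⟨c, F, h1, h2, fun hr => h3 hr.symm⟩
  -- image of gamma0 has exactly k colors
  have himg : gamma0 n k '' (cycleGraph n).edgeSet = ↑(Finset.range k) := by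
    ext m
    simp only [Set.mem_image, Finset.coe_range, Set.mem_Iio]
    constructor
    · rintro ⟨e, he, rfl⟩
      obtain ⟨i, rfl⟩ := edge_repr hn he
      rw [gamma0_E hn]
      exact Nat.mod_lt _ (by omega)
    · intro hm
      refine ⟨Ec ⟨m, by omega⟩, Emem hn _, ?_⟩
      rw [gamma0_E hn]
      exact Nat.mod_eq_of_lt hm
  have hcard : (gamma0 n k '' (cycleGraph n).edgeSet).ncard = k := by
    rw [himg, Set.ncard_coe_finset, Finset.card_range]
  -- upper bound
  have hub : ∀ m ∈ {m : ℕ | ∃ Γ : Sym2 (Fin n) → ℕ, IsMDColoring (cycleGraph n) Γ ∧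
      (Γ '' (cycleGraph n).edgeSet).ncard = m}, m ≤ k := by
    rintro m ⟨Γ, hΓ, rfl⟩
    classical
    set s := (cycleGraph n).edgeFinset with hs
    have himg2 : Γ '' (cycleGraph n).edgeSet = ↑(s.image Γ) := by
      rw [Finset.coe_image, coe_edgeFinset]
    rw [himg2, Set.ncard_coe_finset]
    have hcard_s : s.card ≤ n := by
      calc s.card ≤ (Finset.univ.image (Ec (n := n))).card := by
            apply Finset.card_le_card
            intro e he
            rw [mem_edgeFinset] at he
            obtain ⟨i, rfl⟩ := edge_repr hn he
            exact Finset.mem_image_of_mem _ (Finset.mem_univ i)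
        _ ≤ (Finset.univ : Finset (Fin n)).card := Finset.card_image_le
        _ = n := by simp
    have hfib : ∀ c ∈ s.image Γ, 2 ≤ (s.filter (fun e => Γ e = c)).card := by
      intro c hc
      rw [Finset.mem_image] at hc
      obtain ⟨e, he, rfl⟩ := hc
      rw [mem_edgeFinset] at he
      obtain ⟨i, rfl⟩ := edge_repr hn he
      obtain ⟨c', F, hFsub, hmono, hnr⟩ := hΓ i (i + 1) (no_one hn i)
      have heF : Ec i ∈ F := by
        by_contra h
        exact hnr (SimpleGraph.Adj.reachable
          (SimpleGraph.deleteEdges_adj.mpr ⟨adjE hn i, h⟩))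
      have hc' : c' = Γ (Ec i) := (hmono _ heF).symm
      have hf : ∃ f ∈ F, f ≠ Ec i := by
        by_contra h
        push_neg at h
        have hFsub2 : F ⊆ {Ec i} := fun f hf => h f hf
        apply hnr
        have hle : (cycleGraph n).deleteEdges {Ec i} ≤ (cycleGraph n).deleteEdges F := by
          apply SimpleGraph.deleteEdges_anti hFsub2
        exact (one_edge_reach hn i i (i + 1)).mono hle
      obtain ⟨f, hfF, hfne⟩ := hf
      have hpair : ({Ec i, f} : Finset (Sym2 (Fin n))) ⊆
          s.filter (fun e => Γ e = Γ (Ec i)) := by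
        intro e he'
        rw [Finset.mem_insert, Finset.mem_singleton] at he'
        rw [Finset.mem_filter, mem_edgeFinset]
        rcases he' with rfl | rfl
        · exact ⟨Emem hn i, rfl⟩
        · exact ⟨hFsub hfF, by rw [hmono _ hfF, hc']⟩
      calc 2 = ({Ec i, f} : Finset (Sym2 (Fin n))).card := by
            rw [Finset.card_pair (Ne.symm hfne)]
        _ ≤ _ := Finset.card_le_card hpair
    have hsum : s.card = ∑ c ∈ s.image Γ, (s.filter (fun e => Γ e = c)).card :=
      Finset.card_eq_sum_card_image Γ s
    have h2 : 2 * (s.image Γ).card ≤ s.card := by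
      rw [hsum]
      have := Finset.card_nsmul_le_sum (s.image Γ) _ 2 hfib
      rw [smul_eq_mul] at this
      omega
    omega
  rw [md]
  apply le_antisymm
  · exact csSup_le ⟨k, gamma0 n k, hMD, hcard⟩ hub
  · exact le_csSup ⟨k, hub⟩ ⟨gamma0 n k, hMD, hcard⟩
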